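/- Piola transform divergence identity: let Φ : Û → U be a C² diffeomorphism between open subsets of ℝ^{N+1}, let F : U → ℝ^{N+1} be C¹, and define the Piola pullback F̂ = det(DΦ) · (DΦ)⁻¹ · (F ∘ Φ). Then div F̂ = det(DΦ) · ((div F) ∘ Φ) on Û. -/

import Mathlib

/-- The divergence of a vector field `F : ℝ^M → ℝ^M` at a point. -/
noncomputable def vdiv (M : ℕ) (F : (Fin M → ℝ) → (Fin M → ℝ)) (y : Fin M → ℝ) : ℝ :=
  ∑ i : Fin M, fderiv ℝ F y (Pi.single i 1) i

/-- The Jacobian matrix of a map `Φ : ℝ^M → ℝ^M` at a point. -/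
noncomputable def jacMat (M : ℕ) (Φ : (Fin M → ℝ) → (Fin M → ℝ)) (y : Fin M → ℝ) :
    Matrix (Fin M) (Fin M) ℝ :=
  Matrix.of fun i j => fderiv ℝ Φ y (Pi.single j 1) i

open Matrix

namespace PiolaAux

variable {M : ℕ}

/-- The determinant, as a continuous multilinear map in the rows. -/
noncomputable def detCM (M : ℕ) : ContinuousMultilinearMap ℝ (fun _ : Fin M => (Fin M → ℝ)) ℝ :=
  ∑ σ : Equiv.Perm (Fin M), ((Equiv.Perm.sign σ : ℤ) : ℝ) •
    (ContinuousMultilinearMap.mkPiAlgebra ℝ (Fin M) ℝ).compContinuousLinearMap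
      fun i => ContinuousLinearMap.proj (σ⁻¹ i)

lemma detCM_apply (r : Fin M → (Fin M → ℝ)) : detCM M r = (Matrix.of r).det := by
  classical
  set g : Equiv.Perm (Fin M) → ℝ :=
    fun σ => ((Equiv.Perm.sign σ : ℤ) : ℝ) * ∏ i, r i (σ i) with hg
  have h1 : detCM M r = ∑ σ : Equiv.Perm (Fin M), g σ⁻¹ := by
    simp [detCM, g, ContinuousMultilinearMap.sum_apply,
      ContinuousMultilinearMap.smul_apply,
      ContinuousMultilinearMap.compContinuousLinearMap_apply,
      ContinuousMultilinearMap.mkPiAlgebra_apply, smul_eq_mul]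
  have h2 : ∑ σ : Equiv.Perm (Fin M), g σ⁻¹ = ∑ σ, g σ :=
    Equiv.sum_comp (Equiv.inv (Equiv.Perm (Fin M))) g
  have h3 : (Matrix.of r).det = ∑ σ, g σ := by
    rw [← Matrix.det_transpose, Matrix.det_apply']
    rfl
  rw [h1, h2, h3]

lemma detCM_eq_detRow (r : Fin M → (Fin M → ℝ)) :
    detCM M r = Matrix.detRowAlternating (R := ℝ) (n := Fin M) r := detCM_apply r

lemma detCM_update_zero (r : Fin M → (Fin M → ℝ)) (j : Fin M) :
    detCM M (Function.update r j 0) = 0 := by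
  rw [detCM_apply]
  exact Matrix.det_eq_zero_of_row_eq_zero j (fun l => by simp)

lemma detCM_swap (r : Fin M → (Fin M → ℝ)) {j k : Fin M} (h : j ≠ k)
    (x y : Fin M → ℝ) :
    detCM M (Function.update (Function.update r j x) k y)
      = - detCM M (Function.update (Function.update r j y) k x) := by
  classical
  have hswap := AlternatingMap.map_swap
    (Matrix.detRowAlternating (R := ℝ) (n := Fin M))
    (Function.update (Function.update r j y) k x) h
  rw [detCM_eq_detRow, detCM_eq_detRow, ← hswap]
  congr 1
  funext m
  simp only [Function.comp_apply]
  rcases eq_or_ne m j with rfl | hmj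
  · rw [Equiv.swap_apply_left]
    simp [Function.update_of_ne h, Function.update_of_ne h.symm]
  · rcases eq_or_ne m k with rfl | hmk
    · rw [Equiv.swap_apply_right]
      simp [Function.update_of_ne h, Function.update_of_ne h.symm,
        Function.update_of_ne hmj]
    · rw [Equiv.swap_apply_of_ne_of_ne hmj hmk]
      simp [Function.update_of_ne hmj, Function.update_of_ne hmk]

lemma vec_expand (v : Fin M → ℝ) : v = ∑ l, v l • (Pi.single l 1 : Fin M → ℝ) := by
  ext m
  simp [Finset.sum_apply, Pi.single_apply]

lemma detCM_update_expand (X : Fin M → (Fin M → ℝ)) (k : Fin M) (v : Fin M → ℝ) :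
    detCM M (Function.update X k v)
      = ∑ l, v l * detCM M (Function.update X k (Pi.single l 1)) := by
  classical
  calc detCM M (Function.update X k v)
      = ((detCM M).toContinuousLinearMap X k) v := by
        simp [ContinuousMultilinearMap.toContinuousLinearMap_apply]
    _ = ((detCM M).toContinuousLinearMap X k) (∑ l, v l • (Pi.single l 1 : Fin M → ℝ)) := by
        rw [← vec_expand]
    _ = ∑ l, v l • ((detCM M).toContinuousLinearMap X k) (Pi.single l 1 : _) := by
        rw [map_sum]
        simp
    _ = ∑ l, v l * detCM M (Function.update X k (Pi.single l 1)) := by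
        simp [ContinuousMultilinearMap.toContinuousLinearMap_apply, smul_eq_mul]

end PiolaAux

open PiolaAux in
theorem stmt_2 (N : ℕ) (hN : 1 ≤ N)
    (Uhat U : Set (Fin (N + 1) → ℝ)) (hUhat : IsOpen Uhat) (hU : IsOpen U)
    (Φ : (Fin (N + 1) → ℝ) → (Fin (N + 1) → ℝ))
    (Ψ : (Fin (N + 1) → ℝ) → (Fin (N + 1) → ℝ))
    (hΦ : ContDiffOn ℝ 2 Φ Uhat) (hΨ : ContDiffOn ℝ 2 Ψ U)
    (hmaps : Set.MapsTo Φ Uhat U) (hmaps' : Set.MapsTo Ψ U Uhat)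
    (hinv : ∀ y ∈ Uhat, Ψ (Φ y) = y) (hinv' : ∀ z ∈ U, Φ (Ψ z) = z)
    (F : (Fin (N + 1) → ℝ) → (Fin (N + 1) → ℝ))
    (hF : ContDiffOn ℝ 1 F U)
    (Fhat : (Fin (N + 1) → ℝ) → (Fin (N + 1) → ℝ))
    (hFhat : ∀ y, Fhat y =
      (jacMat (N + 1) Φ y).det • (jacMat (N + 1) Φ y)⁻¹.mulVec (F (Φ y))) :
    ∀ y ∈ Uhat,
      vdiv (N + 1) Fhat y = (jacMat (N + 1) Φ y).det * vdiv (N + 1) F (Φ y) := by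
  classical
  intro y hy
  have hyU : Φ y ∈ U := hmaps hy
  have hUy : Uhat ∈ nhds y := hUhat.mem_nhds hy
  have hUz : U ∈ nhds (Φ y) := hU.mem_nhds hyU
  have hΦdiff : ∀ x ∈ Uhat, HasFDerivAt Φ (fderiv ℝ Φ x) x := fun x hx =>
    ((hΦ.contDiffAt (hUhat.mem_nhds hx)).differentiableAt (by norm_num)).hasFDerivAt
  set A : (Fin (N + 1) → ℝ) → Matrix (Fin (N + 1)) (Fin (N + 1)) ℝ :=
    jacMat (N + 1) Φ with hA
  set φ' := fderiv ℝ Φ y with hφ'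
  set φ'' := fderiv ℝ (fderiv ℝ Φ) y with hφ''
  have hΦ'' : HasFDerivAt (fderiv ℝ Φ) φ'' y :=
    (((hΦ.contDiffAt hUy).fderiv_right (m := 1) (by norm_num)).differentiableAt
      (by norm_num)).hasFDerivAt
  have hev : ∀ᶠ x in nhds y, HasFDerivAt Φ (fderiv ℝ Φ x) x := by
    filter_upwards [hUy] with x hx using hΦdiff x hx
  have hsymm : ∀ u v, φ'' u v = φ'' v u := fun u v =>
    second_derivative_symmetric_of_eventually hev hΦ'' u v
  -- derivatives of the Jacobian entries
  set R' : Fin (N + 1) → ((Fin (N + 1) → ℝ) →L[ℝ] (Fin (N + 1) → ℝ)) :=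
    fun k => ContinuousLinearMap.pi (fun l => (ContinuousLinearMap.proj k).comp
      ((ContinuousLinearMap.apply ℝ (Fin (N + 1) → ℝ) ((Pi.single l 1 : Fin (N + 1) → ℝ))).comp φ'')) with hR'
  have hAkl : ∀ k l, HasFDerivAt (fun x => A x k l)
      ((ContinuousLinearMap.proj k).comp
        ((ContinuousLinearMap.apply ℝ (Fin (N + 1) → ℝ) (Pi.single l 1)).comp φ'')) y := by
    intro k l
    have h0 : HasFDerivAt (fun x => fderiv ℝ Φ x (Pi.single l 1))
        ((ContinuousLinearMap.apply ℝ (Fin (N + 1) → ℝ) (Pi.single l 1)).comp φ'') y :=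
      HasFDerivAt.comp y ((ContinuousLinearMap.apply ℝ (Fin (N + 1) → ℝ)
        ((Pi.single l 1 : Fin (N + 1) → ℝ))).hasFDerivAt) hΦ''
    exact HasFDerivAt.comp y
      ((ContinuousLinearMap.proj k : ((Fin (N + 1) → ℝ)) →L[ℝ] ℝ)).hasFDerivAt h0
  have hRow : ∀ k, HasFDerivAt (fun x => (fun l => A x k l)) (R' k) y := by
    intro k
    exact hasFDerivAt_pi.2 (fun l => hAkl k l)
  -- derivative of the adjugate entries
  set b : Fin (N + 1) → (Fin (N + 1) → ℝ) := fun k l => A y k l with hb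
  set adjD : Fin (N + 1) → Fin (N + 1) → ((Fin (N + 1) → ℝ) →L[ℝ] ℝ) := fun i j =>
    ∑ k, ((detCM (N + 1)).toContinuousLinearMap
        (Function.update b j (Pi.single i 1)) k).comp
      (if k = j then 0 else R' k) with hadjD
  have hadj : ∀ i j, HasFDerivAt (fun x => (A x).adjugate i j) (adjD i j) y := by
    intro i j
    have hcomp : ∀ k, HasFDerivAt
        (fun x => Function.update (fun k' l => A x k' l) j
          (Pi.single i 1 : Fin (N + 1) → ℝ) k)
        (if k = j then 0 else R' k) y := by
      intro k
      rcases eq_or_ne k j with rfl | hk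
      · simp only [Function.update_self, if_pos rfl]
        exact hasFDerivAt_const _ _
      · simp only [Function.update_of_ne hk, if_neg hk]
        exact hRow k
    have h := HasFDerivAt.multilinear_comp (detCM (N + 1))
      (g := fun k x => Function.update (fun k' l => A x k' l) j
        (Pi.single i 1 : Fin (N + 1) → ℝ) k)
      (g' := fun k => if k = j then 0 else R' k) (x := y) hcomp
    have heq : (fun x => (A x).adjugate i j)
        = fun x => (detCM (N + 1)) (fun k => Function.update (fun k' l => A x k' l) j
            (Pi.single i 1 : Fin (N + 1) → ℝ) k) := by
      funext x
      rw [Matrix.adjugate_apply, detCM_apply]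
      rfl
    rw [heq]
    exact h
  -- the Piola identity: column-divergences of the adjugate vanish
  have piola : ∀ j, ∑ i, adjD i j (Pi.single i 1) = 0 := by
    intro j
    have hterm : ∀ i, adjD i j (Pi.single i 1)
        = ∑ k, (if k = j then 0 else
            ∑ l, (φ'' (Pi.single i 1) (Pi.single l 1) k)
              * detCM (N + 1) (Function.update (Function.update b j (Pi.single i 1)) k
                  (Pi.single l 1))) := by
      intro i
      simp only [hadjD, ContinuousLinearMap.sum_apply, ContinuousLinearMap.comp_apply]
      refine Finset.sum_congr rfl fun k _ => ?_
      rcases eq_or_ne k j with rfl | hk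
      · simp only [if_pos rfl, ContinuousLinearMap.zero_apply,
          ContinuousMultilinearMap.toContinuousLinearMap_apply]
        rw [Function.update_idem]
        exact detCM_update_zero b k
      · simp only [if_neg hk, ContinuousMultilinearMap.toContinuousLinearMap_apply]
        have hv : (R' k) (Pi.single i 1)
            = fun l => φ'' (Pi.single i 1) (Pi.single l 1) k := by
          ext l
          simp [hR', ContinuousLinearMap.pi_apply]
        rw [hv, detCM_update_expand]
    rw [Finset.sum_congr rfl (fun i _ => hterm i), Finset.sum_comm]
    refine Finset.sum_eq_zero fun k _ => ?_
    rcases eq_or_ne k j with rfl | hk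
    · simp
    · simp only [if_neg hk]
      set T : Fin (N + 1) → Fin (N + 1) → ℝ := fun i l =>
        detCM (N + 1) (Function.update (Function.update b j (Pi.single i 1)) k
          (Pi.single l 1)) with hT
      set H : Fin (N + 1) → Fin (N + 1) → ℝ := fun i l =>
        φ'' (Pi.single i 1) (Pi.single l 1) k with hH
      have hHsymm : ∀ i l, H i l = H l i := fun i l => congrFun (hsymm _ _) k
      have hTasym : ∀ i l, T l i = - T i l := by
        intro i l
        simp only [hT]
        exact detCM_swap b (Ne.symm hk) (Pi.single l 1) (Pi.single i 1)
      have hS : (∑ i, ∑ l, H i l * T i l) = - ∑ i, ∑ l, H i l * T i l := by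
        calc (∑ i, ∑ l, H i l * T i l) = ∑ i, ∑ l, H l i * T l i := Finset.sum_comm
          _ = ∑ i, ∑ l, -(H i l * T i l) := by
              refine Finset.sum_congr rfl fun i _ => Finset.sum_congr rfl fun l _ => ?_
              rw [← hHsymm i l, hTasym i l]
              ring
          _ = - ∑ i, ∑ l, H i l * T i l := by
              simp [Finset.sum_neg_distrib]
      linarith
  -- invertibility of the Jacobian on Uhat
  have jac_eq : ∀ (f : (Fin (N + 1) → ℝ) → (Fin (N + 1) → ℝ)) x,
      jacMat (N + 1) f x
        = LinearMap.toMatrix' (fderiv ℝ f x : (Fin (N + 1) → ℝ) →ₗ[ℝ] (Fin (N + 1) → ℝ)) := by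
    intro f x
    ext k l
    simp only [jacMat, Matrix.of_apply, LinearMap.toMatrix'_apply,
      ContinuousLinearMap.coe_coe]
  have hdet : ∀ x ∈ Uhat, IsUnit (A x).det := by
    intro x hx
    have hz : Φ x ∈ U := hmaps hx
    have hΨd : HasFDerivAt Ψ (fderiv ℝ Ψ (Φ x)) (Φ x) :=
      ((hΨ.contDiffAt (hU.mem_nhds hz)).differentiableAt (by norm_num)).hasFDerivAt
    have hΦx : HasFDerivAt Φ (fderiv ℝ Φ x) (Ψ (Φ x)) := by
      rw [hinv x hx]; exact hΦdiff x hx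
    have hcomp : HasFDerivAt (fun z => Φ (Ψ z))
        ((fderiv ℝ Φ x).comp (fderiv ℝ Ψ (Φ x))) (Φ x) := hΦx.comp (Φ x) hΨd
    have hid : HasFDerivAt (fun z => Φ (Ψ z))
        (ContinuousLinearMap.id ℝ (Fin (N + 1) → ℝ)) (Φ x) := by
      have hEq : (fun z => Φ (Ψ z)) =ᶠ[nhds (Φ x)] id := by
        filter_upwards [hU.mem_nhds hz] with z hz' using hinv' z hz'
      exact (hasFDerivAt_id (Φ x)).congr_of_eventuallyEq hEq
    have huniq : (fderiv ℝ Φ x).comp (fderiv ℝ Ψ (Φ x))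
        = ContinuousLinearMap.id ℝ (Fin (N + 1) → ℝ) := hcomp.unique hid
    have hmat : A x * jacMat (N + 1) Ψ (Φ x) = 1 := by
      rw [hA, jac_eq Φ x, jac_eq Ψ (Φ x), ← LinearMap.toMatrix'_comp]
      have hco : ((fderiv ℝ Φ x : (Fin (N + 1) → ℝ) →ₗ[ℝ] (Fin (N + 1) → ℝ)).comp
            (fderiv ℝ Ψ (Φ x) : (Fin (N + 1) → ℝ) →ₗ[ℝ] (Fin (N + 1) → ℝ)))
          = (((fderiv ℝ Φ x).comp (fderiv ℝ Ψ (Φ x)) :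
              (Fin (N + 1) → ℝ) →L[ℝ] (Fin (N + 1) → ℝ)) :
              (Fin (N + 1) → ℝ) →ₗ[ℝ] (Fin (N + 1) → ℝ)) := rfl
      rw [hco, huniq]
      simp [LinearMap.toMatrix'_id]
    exact Matrix.isUnit_det_of_right_inverse hmat
  -- the chain-rule part
  set D1 := fderiv ℝ F (Φ y) with hD1
  have hFd : HasFDerivAt F D1 (Φ y) :=
    ((hF.contDiffAt hUz).differentiableAt (by norm_num)).hasFDerivAt
  have hFΦ : HasFDerivAt (fun x => F (Φ x)) (D1.comp φ') y := hFd.comp y (hΦdiff y hy)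
  have hFj : ∀ jj, HasFDerivAt (fun x => F (Φ x) jj)
      ((ContinuousLinearMap.proj jj).comp (D1.comp φ')) y := fun jj =>
    hasFDerivAt_pi'.1 hFΦ jj
  -- the local model G for Fhat and its derivative
  set G : (Fin (N + 1) → ℝ) → (Fin (N + 1) → ℝ) :=
    fun x => ((A x).adjugate).mulVec (F (Φ x)) with hG
  set Gi' : Fin (N + 1) → ((Fin (N + 1) → ℝ) →L[ℝ] ℝ) := fun i =>
    ∑ jj, ((A y).adjugate i jj • ((ContinuousLinearMap.proj jj).comp (D1.comp φ'))
      + (F (Φ y) jj) • adjD i jj) with hGi'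
  have hGder : ∀ i, HasFDerivAt (fun x => G x i) (Gi' i) y := by
    intro i
    have hfun : (fun x => G x i) = fun x => ∑ jj, (A x).adjugate i jj * F (Φ x) jj := by
      funext x
      simp [hG, Matrix.mulVec, dotProduct]
    rw [hfun]
    simp only [hGi']
    exact HasFDerivAt.fun_sum fun jj _ => (hadj i jj).mul (hFj jj)
  have hGd : HasFDerivAt G (ContinuousLinearMap.pi Gi') y := hasFDerivAt_pi.2 hGder
  have hFG : Fhat =ᶠ[nhds y] G := by
    filter_upwards [hUy] with x hx
    have hu := hdet x hx
    rw [hFhat x]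
    simp only [hG]
    rw [Matrix.inv_def, Matrix.smul_mulVec, smul_smul,
      Ring.mul_inverse_cancel _ hu, one_smul]
  have hfderiv : fderiv ℝ Fhat y = ContinuousLinearMap.pi Gi' := by
    rw [hFG.fderiv_eq]
    exact hGd.fderiv
  -- final computation
  have hphi : ∀ i : Fin (N + 1), φ' (Pi.single i 1)
      = ∑ k, A y k i • (Pi.single k 1 : Fin (N + 1) → ℝ) :=
    fun i => vec_expand (φ' (Pi.single i 1))
  have hD1exp : ∀ (i jj : Fin (N + 1)), D1 (φ' (Pi.single i 1)) jj
      = ∑ k, A y k i * D1 (Pi.single k 1) jj := by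
    intro i jj
    rw [hphi i, map_sum]
    simp [Finset.sum_apply, smul_eq_mul]
  have hmulAdj : ∀ k jj : Fin (N + 1), (∑ i, A y k i * (A y).adjugate i jj)
      = (A y).det * (if k = jj then 1 else 0) := by
    intro k jj
    have h2 : (A y * (A y).adjugate) k jj
        = ((A y).det • (1 : Matrix (Fin (N + 1)) (Fin (N + 1)) ℝ)) k jj := by
      rw [Matrix.mul_adjugate]
    rw [Matrix.mul_apply] at h2
    simpa [Matrix.smul_apply, Matrix.one_apply, smul_eq_mul] using h2
  have hGval : ∀ i, Gi' i (Pi.single i 1)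
      = ∑ jj, ((A y).adjugate i jj * (D1 (φ' (Pi.single i 1)) jj)
          + F (Φ y) jj * adjD i jj (Pi.single i 1)) := by
    intro i
    simp [hGi', ContinuousLinearMap.sum_apply, ContinuousLinearMap.add_apply,
      ContinuousLinearMap.smul_apply, smul_eq_mul]
  simp only [vdiv]
  rw [hfderiv]
  calc ∑ i, (ContinuousLinearMap.pi Gi') (Pi.single i 1) i
      = ∑ i, ∑ jj, ((A y).adjugate i jj * (D1 (φ' (Pi.single i 1)) jj)
          + F (Φ y) jj * adjD i jj (Pi.single i 1)) :=
        Finset.sum_congr rfl fun i _ => hGval i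
    _ = (∑ i, ∑ jj, (A y).adjugate i jj * (D1 (φ' (Pi.single i 1)) jj))
        + ∑ i, ∑ jj, F (Φ y) jj * adjD i jj (Pi.single i 1) := by
        rw [← Finset.sum_add_distrib]
        exact Finset.sum_congr rfl fun i _ => Finset.sum_add_distrib
    _ = ∑ i, ∑ jj, (A y).adjugate i jj * (D1 (φ' (Pi.single i 1)) jj) := by
        have hzero : (∑ i, ∑ jj, F (Φ y) jj * adjD i jj (Pi.single i 1)) = 0 := by
          rw [Finset.sum_comm]
          refine Finset.sum_eq_zero fun jj _ => ?_
          rw [← Finset.mul_sum, piola jj, mul_zero]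
        rw [hzero, add_zero]
    _ = ∑ i, ∑ jj, ∑ k, (A y k i * (A y).adjugate i jj) * D1 (Pi.single k 1) jj := by
        refine Finset.sum_congr rfl fun i _ => Finset.sum_congr rfl fun jj _ => ?_
        rw [hD1exp i jj, Finset.mul_sum]
        exact Finset.sum_congr rfl fun k _ => by ring
    _ = ∑ jj, ∑ k, (∑ i, A y k i * (A y).adjugate i jj) * D1 (Pi.single k 1) jj := by
        rw [Finset.sum_comm]
        refine Finset.sum_congr rfl fun jj _ => ?_
        rw [Finset.sum_comm]
        exact Finset.sum_congr rfl fun k _ => (Finset.sum_mul _ _ _).symm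
    _ = ∑ jj, ∑ k, ((A y).det * (if k = jj then 1 else 0)) * D1 (Pi.single k 1) jj := by
        refine Finset.sum_congr rfl fun jj _ => Finset.sum_congr rfl fun k _ => ?_
        rw [hmulAdj]
    _ = (A y).det * ∑ jj, D1 (Pi.single jj 1) jj := by
        rw [Finset.mul_sum]
        refine Finset.sum_congr rfl fun jj _ => ?_
        rw [Finset.sum_eq_single jj]
        · simp
        · intro k _ hkjj
          simp [hkjj]
        · intro h
          exact absurd (Finset.mem_univ jj) h
    _ = (A y).det * ∑ i, fderiv ℝ F (Φ y) (Pi.single i 1) i := by rw [hD1]
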